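/- Let A be a weakly-connected combination matrix and W = T_SR(I − T_RR)^{-1}. Then every column of W sums to one, i.e. 1ᵀ_{N_gS} W = 1ᵀ_{N_gR}. -/
import Mathlib


open Matrix Filter

noncomputable section

/-- The set of agents of a network made of `S + R` sub-networks of sizes `Nsz b`:
an agent is a pair of a sub-network index and an index within that sub-network. -/
abbrev Agent (S R : ℕ) (Nsz : Fin (S + R) → ℕ) := (b : Fin (S + R)) × Fin (Nsz b)

/-- The `b`-th diagonal block of a combination matrix. -/
def diagBlock {S R : ℕ} {Nsz : Fin (S + R) → ℕ}
    (A : Matrix (Agent S R Nsz) (Agent S R Nsz) ℝ) (b : Fin (S + R)) :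
    Matrix (Fin (Nsz b)) (Fin (Nsz b)) ℝ :=
  Matrix.of fun i j => A ⟨b, i⟩ ⟨b, j⟩

/-- Agents belonging to the sending group `S` (the first `S` sub-networks). -/
abbrev SIdx (S R : ℕ) (Nsz : Fin (S + R) → ℕ) := {x : Agent S R Nsz // x.1.val < S}

/-- Agents belonging to the receiving group `R` (the last `R` sub-networks). -/
abbrev RIdx (S R : ℕ) (Nsz : Fin (S + R) → ℕ) := {x : Agent S R Nsz // S ≤ x.1.val}

/-- The block `T_SR` of a combination matrix (weights from `S`-agents to `R`-agents). -/
def TSR {S R : ℕ} {Nsz : Fin (S + R) → ℕ}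
    (A : Matrix (Agent S R Nsz) (Agent S R Nsz) ℝ) :
    Matrix (SIdx S R Nsz) (RIdx S R Nsz) ℝ :=
  Matrix.of fun x y => A x.1 y.1

/-- The block `T_RR` of a combination matrix (weights internal to the `R`-group). -/
def TRR {S R : ℕ} {Nsz : Fin (S + R) → ℕ}
    (A : Matrix (Agent S R Nsz) (Agent S R Nsz) ℝ) :
    Matrix (RIdx S R Nsz) (RIdx S R Nsz) ℝ :=
  Matrix.of fun x y => A x.1 y.1

/-- The matrix `W = T_SR (I - T_RR)⁻¹`. -/
def Wmat {S R : ℕ} {Nsz : Fin (S + R) → ℕ}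
    (A : Matrix (Agent S R Nsz) (Agent S R Nsz) ℝ) :
    Matrix (SIdx S R Nsz) (RIdx S R Nsz) ℝ :=
  TSR A * (1 - TRR A)⁻¹

/-- A "weakly-connected combination matrix": a left-stochastic nonnegative matrix, block
upper-triangular, whose first `S` diagonal blocks are primitive (some power is entrywise
positive) and whose last `R` diagonal blocks are irreducible with all column sums at most
one and at least one column sum strictly less than one (the column-sum conditions on the
`R`-blocks follow from left-stochasticity except for the strict one, which is stated). -/
structure IsWeaklyConnected {S R : ℕ} {Nsz : Fin (S + R) → ℕ}
    (A : Matrix (Agent S R Nsz) (Agent S R Nsz) ℝ) : Prop where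
  S_pos : 1 ≤ S
  R_pos : 1 ≤ R
  Nsz_pos : ∀ b, 1 ≤ Nsz b
  nonneg : ∀ x y, 0 ≤ A x y
  colsum : ∀ y, ∑ x, A x y = 1
  SS_blockdiag : ∀ x y : Agent S R Nsz, y.1.val < S → x.1 ≠ y.1 → A x y = 0
  blockUpper : ∀ x y : Agent S R Nsz, y.1.val < x.1.val → A x y = 0
  primitive : ∀ b : Fin (S + R), b.val < S →
    ∃ m : ℕ, 1 ≤ m ∧ ∀ i j, 0 < ((diagBlock A b) ^ m) i j
  irreducible : ∀ b : Fin (S + R), S ≤ b.val →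
    ∀ i j, ∃ m : ℕ, 1 ≤ m ∧ 0 < ((diagBlock A b) ^ m) i j
  colsum_lt : ∀ b : Fin (S + R), S ≤ b.val → ∃ j, ∑ i, diagBlock A b i j < 1

/-- `p` is the family of Perron eigenvectors of the first `S` diagonal blocks. -/
def IsPerronFamily {S R : ℕ} {Nsz : Fin (S + R) → ℕ}
    (A : Matrix (Agent S R Nsz) (Agent S R Nsz) ℝ)
    (p : (b : Fin (S + R)) → Fin (Nsz b) → ℝ) : Prop :=
  ∀ b : Fin (S + R), b.val < S →
    (∀ i, 0 < p b i) ∧ (∑ i, p b i = 1) ∧ (diagBlock A b).mulVec (p b) = p b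

end
noncomputable section WCAux

open Finset

variable {S R : ℕ} {Nsz : Fin (S + R) → ℕ}

private lemma pow_entry_nonneg {n : ℕ} {B : Matrix (Fin n) (Fin n) ℝ}
    (hB : ∀ i j, 0 ≤ B i j) : ∀ m i j, 0 ≤ (B ^ m) i j := by
  intro m
  induction m with
  | zero =>
    intro i j
    rw [pow_zero]
    by_cases h : i = j <;> simp [Matrix.one_apply, h]
  | succ m ih =>
    intro i j
    rw [pow_succ, Matrix.mul_apply]
    exact Finset.sum_nonneg fun k _ => mul_nonneg (ih i k) (hB k j)

private lemma sum_agent_split (f : Agent S R Nsz → ℝ) :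
    ∑ x : Agent S R Nsz, f x
      = (∑ x : SIdx S R Nsz, f x.1) + ∑ x : RIdx S R Nsz, f x.1 := by
  classical
  rw [← Fintype.sum_subtype_add_sum_subtype (fun x : Agent S R Nsz => x.1.val < S) f]
  congr 1
  exact Fintype.sum_equiv
    (Equiv.subtypeEquivRight fun x => by simp [Nat.not_lt]) _ _ (fun x => rfl)

private lemma sum_agent_sigma (f : Agent S R Nsz → ℝ) :
    ∑ x : Agent S R Nsz, f x = ∑ b : Fin (S + R), ∑ i : Fin (Nsz b), f ⟨b, i⟩ := by
  rw [← Finset.univ_sigma_univ, Finset.sum_sigma]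

variable {A : Matrix (Agent S R Nsz) (Agent S R Nsz) ℝ}

/-- Column sums of `T_RR` are at most 1. -/
private lemma colsum_TRR_le (hA : IsWeaklyConnected A) (y : RIdx S R Nsz) :
    ∑ x : RIdx S R Nsz, TRR A x y ≤ 1 := by
  have h := hA.colsum y.1
  rw [sum_agent_split (fun x => A x y.1)] at h
  have h0 : 0 ≤ ∑ x : SIdx S R Nsz, A x.1 y.1 :=
    Finset.sum_nonneg fun x _ => hA.nonneg _ _
  calc ∑ x : RIdx S R Nsz, TRR A x y = ∑ x : RIdx S R Nsz, A x.1 y.1 := rfl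
    _ ≤ 1 := by linarith

/-- Column sums of a diagonal block are at most 1. -/
private lemma colsum_block_le (hA : IsWeaklyConnected A) (b : Fin (S + R)) (j : Fin (Nsz b)) :
    ∑ i, diagBlock A b i j ≤ 1 := by
  have h := hA.colsum ⟨b, j⟩
  rw [sum_agent_sigma (fun x => A x ⟨b, j⟩)] at h
  have h1 : ∑ i : Fin (Nsz b), A ⟨b, i⟩ ⟨b, j⟩
      ≤ ∑ b' : Fin (S + R), ∑ i : Fin (Nsz b'), A ⟨b', i⟩ ⟨b, j⟩ :=
    Finset.single_le_sum (f := fun b' => ∑ i : Fin (Nsz b'), A ⟨b', i⟩ ⟨b, j⟩)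
      (fun b' _ => Finset.sum_nonneg fun i _ => hA.nonneg _ _) (Finset.mem_univ b)
  calc ∑ i, diagBlock A b i j = ∑ i : Fin (Nsz b), A ⟨b, i⟩ ⟨b, j⟩ := rfl
    _ ≤ 1 := by rw [h] at h1; exact h1

/-- If a nonnegative fixed vector of `T_RR` vanishes on all blocks after `b`, it
vanishes on block `b` as well. -/
private lemma block_zero (hA : IsWeaklyConnected A) {u : RIdx S R Nsz → ℝ}
    (hu0 : ∀ x, 0 ≤ u x) (hfix : (TRR A).mulVec u = u)
    (b : Fin (S + R)) (hb : S ≤ b.val)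
    (hlater : ∀ y : RIdx S R Nsz, b.val < y.1.1.val → u y = 0) :
    ∀ i : Fin (Nsz b), u ⟨⟨b, i⟩, hb⟩ = 0 := by
  classical
  set B := diagBlock A b with hB
  set w : Fin (Nsz b) → ℝ := fun i => u ⟨⟨b, i⟩, hb⟩ with hw
  -- off-block terms vanish
  have hoff : ∀ (x : RIdx S R Nsz) (y : RIdx S R Nsz), y.1.1 ≠ b → x.1.1 = b →
      TRR A x y * u y = 0 := by
    intro x y hy hx
    rcases lt_trichotomy y.1.1.val b.val with h | h | h
    · have : A x.1 y.1 = 0 := hA.blockUpper x.1 y.1 (by rw [hx]; exact h)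
      simp [TRR, this]
    · exact absurd (Fin.ext h) hy
    · rw [hlater y h, mul_zero]
  -- Step A: w is fixed by B
  have hBw : B.mulVec w = w := by
    funext i
    set x : RIdx S R Nsz := ⟨⟨b, i⟩, hb⟩ with hx
    have h1 : w i = ∑ y : RIdx S R Nsz, TRR A x y * u y := by
      calc w i = u x := rfl
        _ = (TRR A).mulVec u x := by rw [hfix]
        _ = ∑ y : RIdx S R Nsz, TRR A x y * u y := rfl
    -- rewrite the sum over RIdx as sum over Agent with a dite
    set G : Agent S R Nsz → ℝ :=
      fun y => if h : S ≤ y.1.val then TRR A x ⟨y, h⟩ * u ⟨y, h⟩ else 0 with hG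
    have h2 : ∑ y : RIdx S R Nsz, TRR A x y * u y = ∑ y : Agent S R Nsz, G y := by
      rw [sum_agent_split G]
      have hS : ∑ y : SIdx S R Nsz, G y.1 = 0 :=
        Finset.sum_eq_zero fun y _ => by
          simp only [hG, dif_neg (Nat.not_le.mpr y.2)]
      have hR : ∑ y : RIdx S R Nsz, G y.1 = ∑ y : RIdx S R Nsz, TRR A x y * u y :=
        Finset.sum_congr rfl fun y _ => by
          simp only [hG, dif_pos y.2]
      rw [hS, hR, zero_add]
    have h3 : ∑ y : Agent S R Nsz, G y = ∑ j : Fin (Nsz b), B i j * w j := by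
      rw [sum_agent_sigma G]
      rw [Finset.sum_eq_single b]
      · apply Finset.sum_congr rfl
        intro j _
        simp only [hG, dif_pos hb]
        rfl
      · intro b' _ hb'
        apply Finset.sum_eq_zero
        intro j _
        by_cases h : S ≤ b'.val
        · simp only [hG, dif_pos h]
          exact hoff x ⟨⟨b', j⟩, h⟩ (by simpa using hb') rfl
        · simp only [hG, dif_neg h]
      · intro h; exact absurd (Finset.mem_univ b) h
    rw [Matrix.mulVec, dotProduct]
    rw [← h3, ← h2, ← h1]
  -- Step B: the column with deficient sum vanishes
  have hw0 : ∀ j, 0 ≤ w j := fun j => hu0 _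
  obtain ⟨j0, hj0⟩ := hA.colsum_lt b hb
  have hsum : ∑ j, (1 - ∑ i, B i j) * w j = 0 := by
    have h1 : ∑ i, B.mulVec w i = ∑ i, w i := by rw [hBw]
    have h2 : ∑ i, B.mulVec w i = ∑ j, (∑ i, B i j) * w j := by
      simp only [Matrix.mulVec, dotProduct]
      rw [Finset.sum_comm]
      exact Finset.sum_congr rfl fun j _ => by rw [← Finset.sum_mul]
    have : ∑ j, (1 - ∑ i, B i j) * w j
        = ∑ j, w j - ∑ j, (∑ i, B i j) * w j := by
      rw [← Finset.sum_sub_distrib]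
      exact Finset.sum_congr rfl fun j _ => by ring
    rw [this, ← h2, h1, sub_self]
  have hterm : ∀ j ∈ Finset.univ, (1 - ∑ i, B i j) * w j = 0 :=
    (Finset.sum_eq_zero_iff_of_nonneg fun j _ =>
      mul_nonneg (by linarith [colsum_block_le hA b j]) (hw0 j)).mp hsum
  have hwj0 : w j0 = 0 := by
    have := hterm j0 (Finset.mem_univ j0)
    rcases mul_eq_zero.mp this with h | h
    · linarith
    · exact h
  -- Step C: powers fix w
  have hpow : ∀ m, (B ^ m).mulVec w = w := by
    intro m
    induction m with
    | zero => simp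
    | succ m ih => rw [pow_succ, ← Matrix.mulVec_mulVec, hBw, ih]
  -- Step D: irreducibility propagates the zero
  intro k
  obtain ⟨m, _, hmpos⟩ := hA.irreducible b hb j0 k
  have hBnn : ∀ i j, 0 ≤ B i j := fun i j => hA.nonneg _ _
  have h0 : ∑ l, (B ^ m) j0 l * w l = 0 := by
    have := congrFun (hpow m) j0
    simpa [Matrix.mulVec, dotProduct, hwj0] using this
  have hterm2 : (B ^ m) j0 k * w k = 0 :=
    (Finset.sum_eq_zero_iff_of_nonneg fun l _ =>
      mul_nonneg (pow_entry_nonneg hBnn m j0 l) (hw0 l)).mp h0 k (Finset.mem_univ k)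
  rcases mul_eq_zero.mp hterm2 with h | h
  · exact absurd h (ne_of_gt (hmpos))
  · exact h

private lemma det_one_sub_TRR_ne (hA : IsWeaklyConnected A) :
    (1 - TRR A).det ≠ 0 := by
  classical
  intro hdet
  obtain ⟨v, hv0, hv⟩ := (Matrix.exists_mulVec_eq_zero_iff).mpr hdet
  have hTv : (TRR A).mulVec v = v := by
    rw [Matrix.sub_mulVec, Matrix.one_mulVec, sub_eq_zero] at hv
    exact hv.symm
  set u : RIdx S R Nsz → ℝ := fun x => |v x| with hu
  have hu0 : ∀ x, 0 ≤ u x := fun x => abs_nonneg _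
  have hle : ∀ x, u x ≤ (TRR A).mulVec u x := by
    intro x
    calc u x = |(TRR A).mulVec v x| := by rw [hTv]
      _ = |∑ y, TRR A x y * v y| := rfl
      _ ≤ ∑ y, |TRR A x y * v y| := Finset.abs_sum_le_sum_abs _ _
      _ = ∑ y, TRR A x y * u y := Finset.sum_congr rfl fun y _ => by
          rw [abs_mul, abs_of_nonneg (show (0:ℝ) ≤ TRR A x y from hA.nonneg _ _)]
      _ = (TRR A).mulVec u x := rfl
  have hsumle : ∑ x, (TRR A).mulVec u x ≤ ∑ x, u x := by
    calc ∑ x, (TRR A).mulVec u x = ∑ x, ∑ y, TRR A x y * u y := rfl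
      _ = ∑ y, (∑ x, TRR A x y) * u y := by
          rw [Finset.sum_comm]
          exact Finset.sum_congr rfl fun y _ => by rw [← Finset.sum_mul]
      _ ≤ ∑ y, 1 * u y := Finset.sum_le_sum fun y _ =>
          mul_le_mul_of_nonneg_right (colsum_TRR_le hA y) (hu0 y)
      _ = ∑ x, u x := by simp
  have heq : (TRR A).mulVec u = u := by
    have hz : ∑ x, ((TRR A).mulVec u x - u x) = 0 := by
      rw [Finset.sum_sub_distrib]
      linarith [Finset.sum_le_sum (fun x (_ : x ∈ Finset.univ) => hle x)]
    funext x
    have := (Finset.sum_eq_zero_iff_of_nonneg fun x _ => sub_nonneg.mpr (hle x)).mp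
      hz x (Finset.mem_univ x)
    linarith
  have hzero : ∀ k, ∀ x : RIdx S R Nsz, S + R ≤ x.1.1.val + k → u x = 0 := by
    intro k
    induction k with
    | zero =>
      intro x hx
      exact absurd hx (Nat.not_le.mpr (by simp))
    | succ k ih =>
      rintro ⟨⟨b, i⟩, hb⟩ hx
      exact block_zero hA hu0 heq b hb
        (fun y hy => ih y (by simp at hx ⊢; omega)) i
  have hv0' : v = 0 := by
    funext x
    have := hzero (S + R) x (by omega)
    simpa [hu] using this
  exact hv0 hv0'

end WCAux

/-- **Columns of `W` sum to one.** For a weakly-connected combination matrix `A` with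
`W = T_SR (I − T_RR)⁻¹`, every column of `W` sums to one: `1ᵀ_{N_gS} W = 1ᵀ_{N_gR}`. -/
theorem Wmat_colsum_one
    (S R : ℕ) (Nsz : Fin (S + R) → ℕ)
    (A : Matrix (Agent S R Nsz) (Agent S R Nsz) ℝ)
    (hA : IsWeaklyConnected A) :
    ∀ y : RIdx S R Nsz, ∑ x : SIdx S R Nsz, Wmat A x y = 1 := by
  classical
  intro y
  set T := TRR A with hT
  have hdet : IsUnit (1 - T).det := isUnit_iff_ne_zero.mpr (det_one_sub_TRR_ne hA)
  have hinv : (1 - T) * (1 - T)⁻¹ = 1 := Matrix.mul_nonsing_inv _ hdet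
  -- column sums of TSR equal column sums of (1 - TRR)
  have hcol : ∀ z : RIdx S R Nsz,
      ∑ x : SIdx S R Nsz, TSR A x z = ∑ w : RIdx S R Nsz, (1 - T) w z := by
    intro z
    have h := hA.colsum z.1
    rw [sum_agent_split (fun x => A x z.1)] at h
    have hone : ∑ w : RIdx S R Nsz, (1 : Matrix (RIdx S R Nsz) (RIdx S R Nsz) ℝ) w z = 1 := by
      simp [Matrix.one_apply]
    have : ∑ w : RIdx S R Nsz, (1 - T) w z
        = 1 - ∑ w : RIdx S R Nsz, T w z := by
      simp only [Matrix.sub_apply]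
      rw [Finset.sum_sub_distrib, hone]
    rw [this]
    have hTS : ∑ x : SIdx S R Nsz, TSR A x z = ∑ x : SIdx S R Nsz, A x.1 z.1 := rfl
    have hTR : ∑ w : RIdx S R Nsz, T w z = ∑ w : RIdx S R Nsz, A w.1 z.1 := rfl
    rw [hTS, hTR]; linarith
  calc ∑ x : SIdx S R Nsz, Wmat A x y
      = ∑ x : SIdx S R Nsz, ∑ z : RIdx S R Nsz, TSR A x z * (1 - T)⁻¹ z y := rfl
    _ = ∑ z : RIdx S R Nsz, (∑ x : SIdx S R Nsz, TSR A x z) * (1 - T)⁻¹ z y := by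
        rw [Finset.sum_comm]
        exact Finset.sum_congr rfl fun z _ => by rw [← Finset.sum_mul]
    _ = ∑ z : RIdx S R Nsz, (∑ w : RIdx S R Nsz, (1 - T) w z) * (1 - T)⁻¹ z y := by
        exact Finset.sum_congr rfl fun z _ => by rw [hcol z]
    _ = ∑ w : RIdx S R Nsz, ∑ z : RIdx S R Nsz, (1 - T) w z * (1 - T)⁻¹ z y := by
        rw [Finset.sum_comm]
        exact Finset.sum_congr rfl fun z _ => by rw [Finset.sum_mul]
    _ = ∑ w : RIdx S R Nsz, ((1 - T) * (1 - T)⁻¹) w y := rfl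
    _ = 1 := by rw [hinv]; simp [Matrix.one_apply]
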